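/- arXiv:1601.04271 — 2 statements merged into one kernel-verified Lean document; each statement's English description precedes it below -/
import Mathlib

section
/- Conversely, if T is a 2n×2n diagonal matrix and there exists a 2n×n rank-n matrix V with span(T V) = span(V) such that no standard basis vector lies in span(V) and every row of V is nonzero, then every diagonal entry of T occurs at least twice. -/
open Matrix

noncomputable section

/-- Column space of a matrix, as the range of its `mulVec` linear map. -/
def colSpace {m n : ℕ} (V : Matrix (Fin m) (Fin n) ℂ) : Submodule ℂ (Fin m → ℂ) :=
  LinearMap.range V.mulVecLin

/-- `v` is an eigenvector of `T`. -/
def IsEigenvector {m : ℕ} (T : Matrix (Fin m) (Fin m) ℂ) (v : Fin m → ℂ) : Prop :=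
  v ≠ 0 ∧ ∃ γ : ℂ, T.mulVec v = γ • v

theorem stmt_8 (n : ℕ) (t : Fin (2*n) → ℂ)
    (V : Matrix (Fin (2*n)) (Fin n) ℂ) (hrank : V.rank = n)
    (hspan : colSpace (Matrix.diagonal t * V) = colSpace V)
    (hbasis : ∀ k : Fin (2*n), (Pi.single k 1 : Fin (2*n) → ℂ) ∉ colSpace V)
    (hrows : ∀ i : Fin (2*n), (fun j => V i j) ≠ 0) :
    ∀ l, ∃ k, k ≠ l ∧ t k = t l := by
  intro l
  by_contra hcon
  push_neg at hcon
  set W := colSpace V with hW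
  have hinv : ∀ w ∈ W, (Matrix.diagonal t).mulVec w ∈ W := by
    intro w hw
    have hmem : (Matrix.diagonal t).mulVec w ∈ colSpace (Matrix.diagonal t * V) := by
      obtain ⟨x, hx⟩ := hw
      refine ⟨x, ?_⟩
      simp only [mulVecLin_apply] at hx ⊢
      rw [← mulVec_mulVec, hx]
    rwa [hspan] at hmem
  have key : ∀ (S : Finset ℂ) (w : Fin (2*n) → ℂ), w ∈ W →
      (fun k => (∏ μ ∈ S, (t k - μ)) * w k) ∈ W := by
    intro S
    induction S using Finset.induction with
    | empty => intro w hw; simpa using hw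
    | @insert μ S hμ ih =>
      intro w hw
      have hu := ih w hw
      have h1 : (Matrix.diagonal t).mulVec (fun k => (∏ ν ∈ S, (t k - ν)) * w k) ∈ W :=
        hinv _ hu
      have h2 : (Matrix.diagonal t).mulVec (fun k => (∏ ν ∈ S, (t k - ν)) * w k)
          - μ • (fun k => (∏ ν ∈ S, (t k - ν)) * w k) ∈ W :=
        W.sub_mem h1 (W.smul_mem μ hu)
      convert h2 using 1
      funext k
      simp only [Pi.sub_apply, Pi.smul_apply, smul_eq_mul, mulVec_diagonal,
        Finset.prod_insert hμ]
      ring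
  obtain ⟨j, hj⟩ : ∃ j, V l j ≠ 0 := by
    by_contra hc; push_neg at hc
    exact hrows l (funext hc)
  set w := V.mulVec (Pi.single j 1) with hwdef
  have hwW : w ∈ W := ⟨Pi.single j 1, rfl⟩
  have hwl : w l = V l j := by
    simp [hwdef, mulVec, dotProduct, Pi.single_apply]
  set S := (Finset.univ.erase l).image t with hS
  have htl : t l ∉ S := by
    simp only [hS, Finset.mem_image, Finset.mem_erase, Finset.mem_univ, and_true]
    rintro ⟨k, hk, hk2⟩
    exact hcon k hk hk2
  have hc : (∏ μ ∈ S, (t l - μ)) ≠ 0 :=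
    Finset.prod_ne_zero_iff.2 fun μ hμ => sub_ne_zero.2 fun he => htl (he ▸ hμ)
  have hmem := key S w hwW
  have heq : (fun k => (∏ μ ∈ S, (t k - μ)) * w k)
      = ((∏ μ ∈ S, (t l - μ)) * w l) • (Pi.single l 1 : Fin (2*n) → ℂ) := by
    funext k
    by_cases hk : k = l
    · subst hk; simp
    · have hkS : t k ∈ S :=
        Finset.mem_image.2 ⟨k, Finset.mem_erase.2 ⟨hk, Finset.mem_univ k⟩, rfl⟩
      simp [Pi.single_apply, hk, Finset.prod_eq_zero hkS]
  rw [heq] at hmem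
  have hfin : (Pi.single l 1 : Fin (2*n) → ℂ) ∈ W := by
    have hw0 : w l ≠ 0 := by rw [hwl]; exact hj
    have := W.smul_mem ((∏ μ ∈ S, (t l - μ)) * w l)⁻¹ hmem
    rwa [smul_smul, inv_mul_cancel₀ (mul_ne_zero hc hw0), one_smul] at this
  exact hbasis l hfin
end
end

section
/- A diagonal 2n×2n matrix T has every diagonal value occurring at least twice if and only if there is a permutation matrix P, an integer 1 ≤ n₁ ≤ n, an invertible n₁×n₁ diagonal matrix T̃, and a 2(n−n₁)×2(n−n₁) diagonal matrix F whose diagonal entries all belong to the set of diagonal entries of T̃, such that T = P · blockdiag(T̃, T̃, F) · Pᵀ. -/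
open Matrix

noncomputable section

/-- Reindexing equivalence for the block structure `blockdiag(T̃, T̃, F)`. -/
def blkEquiv (n n1 : ℕ) (h : n1 ≤ n) :
    (Fin n1 ⊕ (Fin n1 ⊕ Fin (2*(n-n1)))) ≃ Fin (2*n) :=
  (Equiv.sumCongr (Equiv.refl (Fin n1)) finSumFinEquiv).trans
    (finSumFinEquiv.trans (finCongr (by omega)))

namespace Stmt9Aux

lemma card_fiber_eq_count {α γ : Type*} [Fintype α] [DecidableEq γ] (f : α → γ) (b : γ) :
    Fintype.card {a : α // f a = b} = Multiset.count b (Multiset.map f Finset.univ.val) := by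
  classical
  rw [Multiset.count_map, Fintype.card_subtype]
  show Multiset.card _ = _
  rw [Finset.filter_val]
  exact congrArg _ (Multiset.filter_congr fun a _ => by rw [eq_comm])

lemma exists_equiv_of_map_univ_eq {α α' γ : Type*} [Fintype α] [Fintype α']
    (f : α → γ) (g : α' → γ)
    (h : Multiset.map f Finset.univ.val = Multiset.map g Finset.univ.val) :
    ∃ e : α ≃ α', ∀ a, f a = g (e a) := by
  classical
  have hc : ∀ b, Fintype.card {a : α // f a = b} = Fintype.card {a' : α' // g a' = b} := by
    intro b
    have h1 := card_fiber_eq_count f b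
    have h2 := card_fiber_eq_count g b
    rw [h] at h1
    convert h1.trans h2.symm
  refine ⟨(Equiv.sigmaFiberEquiv f).symm.trans
    ((Equiv.sigmaCongrRight fun b => Fintype.equivOfCardEq (hc b)).trans
      (Equiv.sigmaFiberEquiv g)), ?_⟩
  intro a
  exact (((Equiv.sigmaCongrRight fun b => Fintype.equivOfCardEq (hc b))
    ((Equiv.sigmaFiberEquiv f).symm a)).2.2).symm

lemma perm_conj {N : ℕ} (σ : Equiv.Perm (Fin N)) (v : Fin N → ℂ) :
    (σ.permMatrix ℂ) * Matrix.diagonal v * (σ.permMatrix ℂ)ᵀ = Matrix.diagonal (v ∘ σ) := by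
  show σ.toPEquiv.toMatrix * _ * σ.toPEquiv.toMatrixᵀ = _
  rw [← PEquiv.toMatrix_symm, ← Equiv.toPEquiv_symm, PEquiv.mul_toMatrix_toPEquiv,
    PEquiv.toMatrix_toPEquiv_mul, Matrix.submatrix_submatrix, Equiv.symm_symm]
  simp [Matrix.submatrix_diagonal_equiv]

lemma reindex_blocks (n n1 : ℕ) (h : n1 ≤ n) (Tt : Fin n1 → ℂ) (F : Fin (2*(n-n1)) → ℂ) :
    (Matrix.reindex (blkEquiv n n1 h) (blkEquiv n n1 h)
      (Matrix.fromBlocks (Matrix.diagonal Tt) 0 0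
        (Matrix.fromBlocks (Matrix.diagonal Tt) 0 0 (Matrix.diagonal F)))) =
    Matrix.diagonal (Sum.elim Tt (Sum.elim Tt F) ∘ (blkEquiv n n1 h).symm) := by
  rw [Matrix.fromBlocks_diagonal, Matrix.fromBlocks_diagonal, Matrix.reindex_apply,
    Matrix.submatrix_diagonal_equiv]

lemma mapget {γ : Type*} (L : List γ) {K : ℕ} (h : K = L.length) :
    Multiset.map (fun j : Fin K => L.get (Fin.cast h j)) Finset.univ.val = ↑L := by
  subst h
  simp [Fin.univ_val_map, List.ofFn_get]

lemma map_elim_univ {α β γ : Type*} [Fintype α] [Fintype β] (f : α → γ) (g : β → γ) :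
    Multiset.map (Sum.elim f g) Finset.univ.val =
      Multiset.map f Finset.univ.val + Multiset.map g Finset.univ.val := by
  rw [← Finset.univ_disjSum_univ, Finset.val_disjSum, Multiset.disjSum,
    Multiset.map_add, Multiset.map_map, Multiset.map_map]
  rfl

end Stmt9Aux

open Stmt9Aux

theorem stmt_9 (n : ℕ) (hn : 1 ≤ n) (t : Fin (2*n) → ℂ) (ht0 : ∀ i, t i ≠ 0) :
    (∀ l, ∃ k, k ≠ l ∧ t k = t l) ↔
    ∃ (σ : Equiv.Perm (Fin (2*n))) (n1 : ℕ) (_ : 1 ≤ n1) (h2 : n1 ≤ n)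
      (Tt : Fin n1 → ℂ) (F : Fin (2*(n-n1)) → ℂ),
      (∀ i, Tt i ≠ 0) ∧ (∀ j, ∃ i, F j = Tt i) ∧
      Matrix.diagonal t =
        (σ.permMatrix ℂ) *
          (Matrix.reindex (blkEquiv n n1 h2) (blkEquiv n n1 h2)
            (Matrix.fromBlocks (Matrix.diagonal Tt) 0 0
              (Matrix.fromBlocks (Matrix.diagonal Tt) 0 0 (Matrix.diagonal F)))) *
          (σ.permMatrix ℂ)ᵀ := by
  classical
  constructor
  · intro h
    set M : Multiset ℂ := Multiset.map t Finset.univ.val with hM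
    set V : Finset ℂ := Finset.image t Finset.univ with hV
    set m : ℕ := V.card with hm
    have hMcard : Multiset.card M = 2*n := by
      simp [hM]
    have hsub : 2 • V.val ≤ M := by
      rw [Multiset.le_iff_count]
      intro b
      rw [Multiset.count_nsmul]
      by_cases hb : b ∈ V
      · obtain ⟨l, -, rfl⟩ := Finset.mem_image.mp hb
        have hcV : Multiset.count (t l) V.val = 1 :=
          Multiset.count_eq_one_of_mem V.nodup hb
        obtain ⟨k, hkl, hk⟩ := h l
        have h2le : 2 ≤ Multiset.count (t l) M := by
          rw [hM, ← card_fiber_eq_count]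
          have hne : (⟨k, hk⟩ : {i // t i = t l}) ≠ ⟨l, rfl⟩ := by
            intro he
            exact hkl (congrArg Subtype.val he)
          exact Fintype.one_lt_card_iff.mpr ⟨_, _, hne⟩
        omega
      · have : Multiset.count b V.val = 0 :=
          Multiset.count_eq_zero_of_notMem (by exact hb)
        simp [this]
    have hmn : m ≤ n := by
      have := Multiset.card_le_card hsub
      rw [Multiset.card_nsmul, hMcard] at this
      have hv : Multiset.card V.val = m := rfl
      omega
    have hm1 : 1 ≤ m := by
      have : t ⟨0, by omega⟩ ∈ V := Finset.mem_image.mpr ⟨_, Finset.mem_univ _, rfl⟩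
      have := Finset.card_pos.mpr ⟨_, this⟩
      omega
    set R : Multiset ℂ := M - 2 • V.val with hRdef
    have hRadd : 2 • V.val + R = M := add_tsub_cancel_of_le hsub
    have hRcard : Multiset.card R = 2*(n-m) := by
      rw [hRdef, Multiset.card_sub hsub, hMcard, Multiset.card_nsmul]
      have : V.val.card = m := rfl
      omega
    have hLT : m = V.toList.length := (Finset.length_toList V).symm
    have hLF : 2*(n-m) = R.toList.length := by rw [Multiset.length_toList, hRcard]
    set Tt : Fin m → ℂ := fun i => V.toList.get (Fin.cast hLT i) with hTtdef
    set F : Fin (2*(n-m)) → ℂ := fun j => R.toList.get (Fin.cast hLF j) with hFdef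
    have hTt : Multiset.map Tt Finset.univ.val = V.val := by
      rw [hTtdef, mapget]; exact Finset.coe_toList V
    have hF : Multiset.map F Finset.univ.val = R := by
      rw [hFdef, mapget]; exact Multiset.coe_toList R
    have hmemV : ∀ b ∈ V, ∃ i, b = Tt i := by
      intro b hb
      have : b ∈ Multiset.map Tt Finset.univ.val := by rw [hTt]; exact hb
      obtain ⟨i, -, hi⟩ := Multiset.mem_map.mp this
      exact ⟨i, hi.symm⟩
    have hTt0 : ∀ i, Tt i ≠ 0 := by
      intro i
      have : Tt i ∈ Multiset.map Tt Finset.univ.val :=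
        Multiset.mem_map.mpr ⟨i, Finset.mem_univ i, rfl⟩
      rw [hTt] at this
      obtain ⟨l, -, hl⟩ := Finset.mem_image.mp (show Tt i ∈ Finset.image t Finset.univ from this)
      rw [← hl]; exact ht0 l
    have hFTt : ∀ j, ∃ i, F j = Tt i := by
      intro j
      have h1 : F j ∈ Multiset.map F Finset.univ.val :=
        Multiset.mem_map.mpr ⟨j, Finset.mem_univ j, rfl⟩
      rw [hF] at h1
      have h2 : F j ∈ M := Multiset.mem_of_le tsub_le_self h1
      rw [hM] at h2
      obtain ⟨l, -, hl⟩ := Multiset.mem_map.mp h2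
      exact hmemV _ (Finset.mem_image.mpr ⟨l, Finset.mem_univ _, hl⟩)
    set d : Fin (2*n) → ℂ :=
      (Sum.elim Tt (Sum.elim Tt F)) ∘ (blkEquiv n m hmn).symm with hd
    have hdmap : Multiset.map d Finset.univ.val = M := by
      rw [hd, ← Multiset.map_map, Multiset.map_univ_val_equiv,
        map_elim_univ, map_elim_univ, hTt, hF, ← hRadd, two_nsmul, add_assoc]
    obtain ⟨σ, hσ⟩ := exists_equiv_of_map_univ_eq t d (by rw [hdmap, hM])
    refine ⟨σ, m, hm1, hmn, Tt, F, hTt0, hFTt, ?_⟩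
    rw [reindex_blocks, perm_conj]
    exact congrArg Matrix.diagonal (funext hσ)
  · rintro ⟨σ, m, hm1, hmn, Tt, F, hTt0, hFTt, heq⟩ l
    rw [reindex_blocks, perm_conj] at heq
    have ht : ∀ i, t i =
        Sum.elim Tt (Sum.elim Tt F) ((blkEquiv n m hmn).symm (σ i)) := by
      intro i
      have := congrFun (congrFun heq i) i
      simpa using this
    set e := blkEquiv n m hmn with he
    set dd := Sum.elim Tt (Sum.elim Tt F) with hdd
    have key : ∃ s', s' ≠ e.symm (σ l) ∧ dd s' = dd (e.symm (σ l)) := by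
      rcases hs : e.symm (σ l) with i | s
      · exact ⟨Sum.inr (Sum.inl i), by simp, rfl⟩
      · rcases s with i | j
        · exact ⟨Sum.inl i, by simp, rfl⟩
        · obtain ⟨i, hi⟩ := hFTt j
          exact ⟨Sum.inl i, by simp, by simp [hdd, hi]⟩
    obtain ⟨s', hne, hval⟩ := key
    refine ⟨σ.symm (e s'), ?_, ?_⟩
    · intro hkl
      apply hne
      have : e s' = σ l := by
        conv_rhs => rw [← hkl]
        simp
      rw [← this]; simp
    · rw [ht (σ.symm (e s')), ht l]
      simp only [Equiv.apply_symm_apply]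
      rw [Equiv.symm_apply_apply]
      exact hval
end
end
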